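/- For 0 ≤ v ≤ 1/2 and 0 < x ≤ 1, we have M_v(x) ≤ exp(4v(1-v)(K(x) - 1)), where M_v(x) = 1 + v(1-v)(x-1)^2/(2 x^(v+1)) and K(x) = (x+1)^2/(4x). -/

import Mathlib

lemma sinh_aux (u : ℝ) (hu : 0 ≤ u) : 2 * u ≤ Real.exp u - Real.exp (-u) := by
  have h1 : 1 + u + u ^ 2 / 2 ≤ Real.exp u := Real.quadratic_le_exp_of_nonneg hu
  have h2 : Real.exp u * Real.exp (-u) = 1 := by
    rw [← Real.exp_add]; simp
  have h3 : (0:ℝ) < Real.exp (-u) := Real.exp_pos _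
  nlinarith [sq_nonneg (u ^ 2), sq_nonneg u, mul_nonneg hu h3.le,
    mul_nonneg (mul_nonneg hu hu) h3.le]

lemma hexp_aux (x v t a : ℝ) (hx0 : 0 < x) (ht : t = a * ((x - 1) ^ 2 / x))
    (ha : a = v * (1 - v)) :
    4 * v * (1 - v) * ((x + 1) ^ 2 / (4 * x) - 1) = t := by
  rw [ht, ha]
  field_simp
  ring_nf

theorem Mv_le_exp_dragomir (x v : ℝ) (hv0 : 0 ≤ v) (hv1 : v ≤ 1 / 2)
    (hx0 : 0 < x) (hx1 : x ≤ 1) :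
    1 + v * (1 - v) * (x - 1) ^ 2 / (2 * x ^ (v + 1))
      ≤ Real.exp (4 * v * (1 - v) * ((x + 1) ^ 2 / (4 * x) - 1)) := by
  set L : ℝ := -Real.log x with hL
  clear_value L
  have hL0 : 0 ≤ L := by
    rw [hL, neg_nonneg]
    exact Real.log_nonpos hx0.le hx1
  have hxe : x = Real.exp (-L) := by rw [hL, neg_neg, Real.exp_log hx0]
  set a : ℝ := v * (1 - v) with ha
  clear_value a
  have ha0 : 0 ≤ a := by rw [ha]; exact mul_nonneg hv0 (by linarith)
  have hav : v / 2 ≤ a := by rw [ha]; nlinarith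
  set t : ℝ := a * ((x - 1) ^ 2 / x) with ht
  clear_value t
  -- step 1: L^2 ≤ (x-1)^2/x
  have hs : L ^ 2 ≤ (x - 1) ^ 2 / x := by
    have h := sinh_aux (L / 2) (by linarith)
    set E : ℝ := Real.exp (L / 2) with hE
    set F : ℝ := Real.exp (-(L / 2)) with hF
    have h2 : E * F = 1 := by rw [hE, hF, ← Real.exp_add]; simp
    have hx2 : x = F * F := by
      rw [hxe, hF, ← Real.exp_add]; ring_nf
    have he : (x - 1) ^ 2 / x = (E - F) ^ 2 := by
      rw [div_eq_iff hx0.ne']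
      rw [hx2]
      linear_combination (2 * F ^ 2 - 1 - E * F) * h2
    rw [he]
    nlinarith
  have ht0 : 0 ≤ t := by
    rw [ht]; exact mul_nonneg ha0 (div_nonneg (sq_nonneg _) hx0.le)
  have hts : v / 2 * L ^ 2 ≤ t := by
    rw [ht]; exact mul_le_mul hav hs (sq_nonneg _) ha0
  -- step 2: v * L ≤ t/2 + log 2
  have hlog2 : (1:ℝ)/2 ≤ Real.log 2 := by
    have := Real.log_two_gt_d9
    linarith
  have hkey : v * L ≤ t / 2 + Real.log 2 := by
    nlinarith [mul_nonneg hv0 (sq_nonneg (L - 2))]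
  -- step 3: exp(vL) ≤ 2 exp(t/2)
  have hstep3 : Real.exp (v * L) ≤ 2 * Real.exp (t / 2) := by
    calc Real.exp (v * L) ≤ Real.exp (t / 2 + Real.log 2) := Real.exp_le_exp.2 hkey
      _ = 2 * Real.exp (t / 2) := by
          rw [Real.exp_add, Real.exp_log (by norm_num)]; ring
  -- step 4: 1 + t * exp(t/2) ≤ exp t
  have hstep4 : 1 + t * Real.exp (t / 2) ≤ Real.exp t := by
    have h := sinh_aux (t / 2) (by linarith)
    have hE : (0:ℝ) < Real.exp (t / 2) := Real.exp_pos _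
    have h2 : Real.exp (t / 2) * Real.exp (-(t / 2)) = 1 := by
      rw [← Real.exp_add]; simp
    have h3 : Real.exp t = Real.exp (t / 2) * Real.exp (t / 2) := by
      rw [← Real.exp_add]; ring_nf
    nlinarith
  -- rewrite goal
  have hexp := hexp_aux x v t a hx0 ht ha
  rw [hexp]
  have hlhs : a * (x - 1) ^ 2 / (2 * x ^ (v + 1))
      = t / 2 * Real.exp (v * L) := by
    rw [Real.rpow_def_of_pos hx0, ht, ha, hL]
    rw [show Real.log x * (v + 1) = v * Real.log x + Real.log x by ring, Real.exp_add,
      Real.exp_log hx0]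
    rw [show v * -Real.log x = -(v * Real.log x) by ring, Real.exp_neg]
    have hg : (0:ℝ) < Real.exp (v * Real.log x) := Real.exp_pos _
    field_simp
  rw [hlhs]
  have h5 : t / 2 * Real.exp (v * L) ≤ t * Real.exp (t / 2) := by
    calc t / 2 * Real.exp (v * L) ≤ t / 2 * (2 * Real.exp (t / 2)) :=
          mul_le_mul_of_nonneg_left hstep3 (by linarith)
      _ = t * Real.exp (t / 2) := by ring
  linarith
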